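/- For p>1 and any ℓ ≤ 0, lim_{α→0⁺} α·ω_p(ℓ/α)^p = −ℓ/(p−1), where ω_p is the inverse of H_p(z) = p z^{p−1} − (p−1)z^p extended to (−∞,1] (so ω_p : (−∞,1] → [1,∞) with H_p(ω_p(s)) = s). -/

import Mathlib

open Real Set Filter Topology

/-- For `p > 1` and `ℓ ≤ 0`, `lim_{α→0⁺} α · ω_p(ℓ/α)^p = -ℓ/(p-1)`, where `ω_p` is
the inverse of `H_p(z) = p z^(p-1) - (p-1) z^p` extended to `(-∞, 1]`. -/
theorem limit_alpha_omega_pow (p : ℝ) (hp : 1 < p) (ωp : ℝ → ℝ)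
    (hωp : ∀ s ≤ (1 : ℝ), 1 ≤ ωp s ∧ p * ωp s ^ (p - 1) - (p - 1) * ωp s ^ p = s)
    (ℓ : ℝ) (hℓ : ℓ ≤ 0) :
    Tendsto (fun α : ℝ => α * ωp (ℓ / α) ^ p) (𝓝[>] 0) (𝓝 (-ℓ / (p - 1))) := by
  have hp0 : (0:ℝ) < p := by linarith
  have hp1 : (0:ℝ) < p - 1 := by linarith
  rcases hℓ.eq_or_lt with h0 | hneg
  · -- case ℓ = 0
    subst h0
    have : Tendsto (fun α : ℝ => α * ωp 0 ^ p) (𝓝[>] 0) (𝓝 (0 * ωp 0 ^ p)) :=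
      (tendsto_id.mul tendsto_const_nhds).mono_left nhdsWithin_le_nhds
    simpa using this
  · -- case ℓ < 0
    have hs : ∀ α : ℝ, 0 < α → ℓ / α ≤ 1 := fun α hα =>
      le_trans (le_of_lt (div_neg_of_neg_of_pos hneg hα)) zero_le_one
    -- z := ωp (ℓ/α) tends to atTop
    have ztop : Tendsto (fun α : ℝ => ωp (ℓ / α)) (𝓝[>] 0) atTop := by
      have hlow : Tendsto (fun α : ℝ => ((-ℓ) / ((p - 1) * α)) ^ (1/p)) (𝓝[>] 0) atTop := by
        apply (tendsto_rpow_atTop (by positivity : (0:ℝ) < 1/p)).comp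
        have h1 : Tendsto (fun α : ℝ => ((-ℓ)/(p-1)) * α⁻¹) (𝓝[>] 0) atTop :=
          Tendsto.const_mul_atTop (div_pos (neg_pos.mpr hneg) hp1) tendsto_inv_nhdsGT_zero
        apply h1.congr
        intro α
        rw [div_mul_eq_div_div]
        ring
      apply tendsto_atTop_mono' _ _ hlow
      filter_upwards [self_mem_nhdsWithin] with α hα
      have hα : (0:ℝ) < α := hα
      obtain ⟨hz1, heq⟩ := hωp (ℓ / α) (hs α hα)
      set z := ωp (ℓ / α)
      have hz0 : (0:ℝ) < z := lt_of_lt_of_le zero_lt_one hz1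
      have hzp : (-ℓ) / ((p-1) * α) ≤ z ^ p := by
        have h2 : 0 ≤ p * z ^ (p-1) := by positivity
        have h3 : -ℓ / α ≤ (p - 1) * z ^ p := by
          have h4 : (p - 1) * z ^ p = p * z ^ (p-1) - ℓ / α := by linarith
          rw [h4, neg_div]; linarith
        rw [div_le_iff₀ (by positivity), mul_comm (p-1) α, ← mul_assoc]
        rw [div_le_iff₀ hα] at h3
        linarith [h3]
      calc ((-ℓ) / ((p - 1) * α)) ^ (1/p) ≤ (z ^ p) ^ (1/p) :=
            Real.rpow_le_rpow (div_nonneg (by linarith) (by positivity)) hzp (by positivity)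
        _ = z := by
            rw [← Real.rpow_mul hz0.le, mul_one_div_cancel hp0.ne', Real.rpow_one]
    -- the limit of the closed-form expression
    have hmain : Tendsto (fun α : ℝ => ℓ / (p / ωp (ℓ / α) - (p - 1))) (𝓝[>] 0)
        (𝓝 (ℓ / (0 - (p - 1)))) := by
      apply Tendsto.div tendsto_const_nhds
      · exact (tendsto_const_nhds.div_atTop ztop).sub tendsto_const_nhds
      · simp only [zero_sub, ne_eq, neg_eq_zero]
        exact hp1.ne'
    have hval : ℓ / (0 - (p - 1)) = -ℓ / (p - 1) := by
      rw [zero_sub, div_neg, neg_div]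
    rw [← hval]
    apply hmain.congr'
    filter_upwards [self_mem_nhdsWithin] with α hα
    have hα : (0:ℝ) < α := hα
    obtain ⟨hz1, heq⟩ := hωp (ℓ / α) (hs α hα)
    set z := ωp (ℓ / α)
    have hz0 : (0:ℝ) < z := lt_of_lt_of_le zero_lt_one hz1
    have hzp0 : (0:ℝ) < z ^ p := Real.rpow_pos_of_pos hz0 p
    have hzz : z ^ (p - 1) = z ^ p / z := by
      rw [Real.rpow_sub hz0, Real.rpow_one]
    -- ℓ / α = z^p * (p/z - (p-1))
    have hkey : ℓ / α = z ^ p * (p / z - (p - 1)) := by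
      rw [← heq, hzz]; field_simp
    have hdneg : p / z - (p - 1) < 0 := by
      by_contra h
      push_neg at h
      have : 0 ≤ ℓ / α := hkey ▸ mul_nonneg hzp0.le h
      exact absurd this (not_le.mpr (div_neg_of_neg_of_pos hneg hα))
    rw [div_eq_iff hdneg.ne]
    have := hkey
    field_simp at this ⊢
    linarith [this]
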